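/- Let G = ZMod 5 × ZMod 5 × ZMod 5 and X = Option G, writing ∞ for none, with G acting on X by translation (g • some x = some (x + g), g • ∞ = ∞). Let ℬ be the family of all translates of the five base blocks B1 = {(0,0,0),(0,0,1),(0,0,2),(0,0,3),(0,0,4)} ∪ {∞}, B2 = {(0,0,0),(0,1,0),(1,0,0),(1,1,1),(2,3,1),(4,3,2)}, B3 = {(0,0,0),(0,1,2),(1,2,1),(1,4,2),(2,0,0),(2,1,4)}, B4 = {(0,0,0),(0,1,3),(2,2,4),(2,4,1),(3,2,3),(3,4,3)}, B5 = {(0,0,0),(0,2,3),(2,0,3),(2,2,2),(3,1,3),(4,1,1)} (group elements embedded in X via some). Then every block of ℬ has exactly 6 elements and every pair of distinct points of X is contained in exactly one block of ℬ; that is, ℬ is a Steiner system S(2,6,126) (a unital of order 5) on X, invariant under the translation action with the single fixed point ∞. -/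

import Mathlib

/-- Translation action of `G = ZMod 5 × ZMod 5 × ZMod 5` on `Option G`:
`g • some x = some (x + g)`, `g • ∞ = ∞`. -/
def trG6 (g : ZMod 5 × ZMod 5 × ZMod 5) :
    Option (ZMod 5 × ZMod 5 × ZMod 5) → Option (ZMod 5 × ZMod 5 × ZMod 5) :=
  Option.map (fun a => a + g)

/-- The five base blocks of the difference family. -/
def baseBlocks6 : List (Finset (Option (ZMod 5 × ZMod 5 × ZMod 5))) :=
  [ {some (0, 0, 0), some (0, 0, 1), some (0, 0, 2), some (0, 0, 3), some (0, 0, 4), none},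
    {some (0, 0, 0), some (0, 1, 0), some (1, 0, 0), some (1, 1, 1), some (2, 3, 1),
     some (4, 3, 2)},
    {some (0, 0, 0), some (0, 1, 2), some (1, 2, 1), some (1, 4, 2), some (2, 0, 0),
     some (2, 1, 4)},
    {some (0, 0, 0), some (0, 1, 3), some (2, 2, 4), some (2, 4, 1), some (3, 2, 3),
     some (3, 4, 3)},
    {some (0, 0, 0), some (0, 2, 3), some (2, 0, 3), some (2, 2, 2), some (3, 1, 3),
     some (4, 1, 1)} ]

/-- The family of all translates of the base blocks. -/
def blocks6 : Set (Finset (Option (ZMod 5 × ZMod 5 × ZMod 5))) :=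
  { B | ∃ g : ZMod 5 × ZMod 5 × ZMod 5, ∃ B0 ∈ baseBlocks6, B = B0.image (trG6 g) }

/-! ### Auxiliary definitions -/

abbrev G5 := ZMod 5 × ZMod 5 × ZMod 5

/-- The finite parts of base blocks 2–5 as a function. -/
def bfun : Fin 4 → Fin 6 → G5 :=
  ![![(0,0,0),(0,1,0),(1,0,0),(1,1,1),(2,3,1),(4,3,2)],
    ![(0,0,0),(0,1,2),(1,2,1),(1,4,2),(2,0,0),(2,1,4)],
    ![(0,0,0),(0,1,3),(2,2,4),(2,4,1),(3,2,3),(3,4,3)],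
    ![(0,0,0),(0,2,3),(2,0,3),(2,2,2),(3,1,3),(4,1,1)]]

def bblk (i : Fin 4) : Finset (Option G5) := Finset.univ.image (fun j => some (bfun i j))

def bcol : Finset (Option G5) :=
  {some (0, 0, 0), some (0, 0, 1), some (0, 0, 2), some (0, 0, 3), some (0, 0, 4), none}

/-- Ordered difference map on index triples. -/
def Fd : (Fin 4 × Fin 6 × Fin 6) → G5 := fun t => bfun t.1 t.2.2 - bfun t.1 t.2.1

def Sidx : Finset (Fin 4 × Fin 6 × Fin 6) := Finset.univ.filter (fun t => t.2.1 ≠ t.2.2)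

/-! ### Decidable core facts -/

lemma hlist : baseBlocks6 = [bcol, bblk 0, bblk 1, bblk 2, bblk 3] := by decide

lemma hbcol_mem : bcol ∈ baseBlocks6 := by rw [hlist]; exact List.mem_cons_self

lemma hbblk_mem (i : Fin 4) : bblk i ∈ baseBlocks6 := by
  rw [hlist]; fin_cases i <;> simp

set_option maxRecDepth 100000 in
lemma hmem_bcol : ∀ x : Option G5,
    x ∈ bcol ↔ x = none ∨ ∃ a : ZMod 5, x = some (0, 0, a) := by decide

set_option maxRecDepth 100000 in
set_option maxHeartbeats 1600000 in
lemma hImg : Sidx.image Fd = Finset.univ.filter (fun d : G5 => ¬(d.1 = 0 ∧ d.2.1 = 0)) := by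
  decide

set_option maxRecDepth 100000 in
set_option maxHeartbeats 1600000 in
lemma hCard : (Sidx.image Fd).card = Sidx.card := by decide

/-! ### Basic lemmas about the action -/

@[simp] lemma trG6_some (g a : G5) : trG6 g (some a) = some (a + g) := rfl

@[simp] lemma trG6_none' (g : G5) : trG6 g none = none := rfl

lemma trG6_inj (g : G5) : Function.Injective (trG6 g) :=
  Option.map_injective (add_left_injective g)

lemma trG6_comp (g h : G5) (x : Option G5) : trG6 h (trG6 g x) = trG6 (g + h) x := by
  cases x <;> simp [trG6, add_assoc]

lemma mem_image_some {B0 : Finset (Option G5)} {g x : G5} :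
    some x ∈ B0.image (trG6 g) ↔ some (x - g) ∈ B0 := by
  constructor
  · intro h
    obtain ⟨b, hb, he⟩ := Finset.mem_image.mp h
    cases b with
    | none => exact absurd he (by simp [trG6])
    | some a =>
      have ha : a + g = x := by simpa [trG6] using he
      have : x - g = a := by rw [← ha]; ring
      rwa [this]
  · intro h
    refine Finset.mem_image.mpr ⟨some (x - g), h, ?_⟩
    simp

lemma mem_image_none {B0 : Finset (Option G5)} {g : G5} :
    (none ∈ B0.image (trG6 g)) ↔ none ∈ B0 := by
  constructor
  · intro h
    obtain ⟨b, hb, he⟩ := Finset.mem_image.mp h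
    cases b with
    | none => exact hb
    | some a => exact absurd he (by simp [trG6])
  · intro h
    exact Finset.mem_image.mpr ⟨none, h, rfl⟩

lemma mem_bblk_img {i : Fin 4} {g x : G5} :
    some x ∈ (bblk i).image (trG6 g) ↔ ∃ j, bfun i j = x - g := by
  rw [mem_image_some]
  simp [bblk]

lemma mem_bcol_img {g y : G5} :
    some y ∈ bcol.image (trG6 g) ↔ y.1 = g.1 ∧ y.2.1 = g.2.1 := by
  rw [mem_image_some, hmem_bcol]
  constructor
  · rintro (h | ⟨a, h⟩)
    · exact absurd h (by simp)
    · rw [Option.some_inj] at h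
      constructor
      · have h1 := congrArg Prod.fst h
        rw [Prod.fst_sub] at h1
        exact sub_eq_zero.mp h1
      · have h2 := congrArg (fun p : G5 => p.2.1) h
        simp only [Prod.snd_sub, Prod.fst_sub] at h2
        exact sub_eq_zero.mp h2
  · rintro ⟨h1, h2⟩
    right
    refine ⟨(y - g).2.2, ?_⟩
    rw [Option.some_inj]
    have e1 : (y - g).1 = 0 := by rw [Prod.fst_sub]; exact sub_eq_zero.mpr h1
    have e2 : (y - g).2.1 = 0 := by
      rw [Prod.snd_sub, Prod.fst_sub]; exact sub_eq_zero.mpr h2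
    exact Prod.ext_iff.mpr ⟨e1, Prod.ext_iff.mpr ⟨e2, rfl⟩⟩

lemma bcol_img_eq {g g' : G5} (h1 : g.1 = g'.1) (h2 : g.2.1 = g'.2.1) :
    bcol.image (trG6 g) = bcol.image (trG6 g') := by
  ext x
  cases x with
  | none => rw [mem_image_none, mem_image_none]
  | some y => rw [mem_bcol_img, mem_bcol_img, h1, h2]

lemma bblk_cases {B0 : Finset (Option G5)} (h : B0 ∈ baseBlocks6) :
    B0 = bcol ∨ ∃ i : Fin 4, B0 = bblk i := by
  rw [hlist] at h
  simp only [List.mem_cons, List.not_mem_nil, or_false] at h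
  rcases h with rfl | rfl | rfl | rfl | rfl
  · exact Or.inl rfl
  · exact Or.inr ⟨0, rfl⟩
  · exact Or.inr ⟨1, rfl⟩
  · exact Or.inr ⟨2, rfl⟩
  · exact Or.inr ⟨3, rfl⟩

/-! ### Consequences of the decidable core facts -/

lemma mem_Sidx {t : Fin 4 × Fin 6 × Fin 6} (h : Fd t ≠ 0) : t ∈ Sidx := by
  rw [Sidx, Finset.mem_filter]
  refine ⟨Finset.mem_univ _, fun he => h ?_⟩
  show bfun t.1 t.2.2 - bfun t.1 t.2.1 = 0
  rw [← he, sub_self]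

lemma Fd_unique {s t : Fin 4 × Fin 6 × Fin 6} (h : Fd s = Fd t) (h0 : Fd t ≠ 0) : s = t := by
  have hinjOn : Set.InjOn Fd ↑Sidx := Finset.card_image_iff.mp hCard
  exact hinjOn (Finset.mem_coe.mpr (mem_Sidx (h ▸ h0))) (Finset.mem_coe.mpr (mem_Sidx h0)) h

lemma Fd_noncol {t : Fin 4 × Fin 6 × Fin 6} (h0 : Fd t ≠ 0) :
    ¬((Fd t).1 = 0 ∧ (Fd t).2.1 = 0) := by
  have : Fd t ∈ Sidx.image Fd := Finset.mem_image_of_mem _ (mem_Sidx h0)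
  rw [hImg, Finset.mem_filter] at this
  exact this.2

lemma Fd_exists {d : G5} (hd : ¬(d.1 = 0 ∧ d.2.1 = 0)) : ∃ t ∈ Sidx, Fd t = d := by
  have : d ∈ Sidx.image Fd := by
    rw [hImg, Finset.mem_filter]; exact ⟨Finset.mem_univ _, hd⟩
  exact Finset.mem_image.mp this

/-! ### Pair coverage -/

lemma cover_inf (x : G5) : ∃! B, B ∈ blocks6 ∧ none ∈ B ∧ some x ∈ B := by
  refine ⟨bcol.image (trG6 x), ⟨⟨x, bcol, hbcol_mem, rfl⟩, ?_, ?_⟩, ?_⟩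
  · rw [mem_image_none]; decide
  · exact mem_bcol_img.mpr ⟨rfl, rfl⟩
  · rintro B' ⟨⟨g', B0', hB0', rfl⟩, hn', hx'⟩
    rcases bblk_cases hB0' with rfl | ⟨i, rfl⟩
    · obtain ⟨e1, e2⟩ := mem_bcol_img.mp hx'
      exact bcol_img_eq e1.symm e2.symm
    · exfalso
      rw [mem_image_none] at hn'
      simp [bblk] at hn'

lemma cover_fin {x y : G5} (hxy : x ≠ y) :
    ∃! B, B ∈ blocks6 ∧ some x ∈ B ∧ some y ∈ B := by
  have hd0 : y - x ≠ 0 := sub_ne_zero.mpr (Ne.symm hxy)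
  by_cases hcol : (y - x).1 = 0 ∧ (y - x).2.1 = 0
  · -- column case
    refine ⟨bcol.image (trG6 x), ⟨⟨x, bcol, hbcol_mem, rfl⟩, ?_, ?_⟩, ?_⟩
    · exact mem_bcol_img.mpr ⟨rfl, rfl⟩
    · refine mem_bcol_img.mpr ⟨?_, ?_⟩
      · have := hcol.1; rw [Prod.fst_sub] at this; exact sub_eq_zero.mp this
      · have := hcol.2; rw [Prod.snd_sub, Prod.fst_sub] at this; exact sub_eq_zero.mp this
    · rintro B' ⟨⟨g', B0', hB0', rfl⟩, hx', hy'⟩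
      rcases bblk_cases hB0' with rfl | ⟨i, rfl⟩
      · obtain ⟨e1, e2⟩ := mem_bcol_img.mp hx'
        exact bcol_img_eq e1.symm e2.symm
      · exfalso
        obtain ⟨j, hj⟩ := mem_bblk_img.mp hx'
        obtain ⟨k, hk⟩ := mem_bblk_img.mp hy'
        have hF : Fd (i, j, k) = y - x := by
          show bfun i k - bfun i j = y - x
          rw [hk, hj]; exact sub_sub_sub_cancel_right y x g'
        exact (Fd_noncol (hF ▸ hd0)) (hF ▸ hcol)
  · -- generic case
    obtain ⟨t, htS, htF⟩ := Fd_exists hcol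
    obtain ⟨i, j, k⟩ := t
    have htF' : bfun i k - bfun i j = y - x := htF
    refine ⟨(bblk i).image (trG6 (x - bfun i j)),
      ⟨⟨x - bfun i j, bblk i, hbblk_mem i, rfl⟩, ?_, ?_⟩, ?_⟩
    · exact mem_bblk_img.mpr ⟨j, (sub_sub_cancel x (bfun i j)).symm⟩
    · refine mem_bblk_img.mpr ⟨k, ?_⟩
      linear_combination htF'
    · rintro B' ⟨⟨g', B0', hB0', rfl⟩, hx', hy'⟩
      rcases bblk_cases hB0' with rfl | ⟨i', rfl⟩
      · exfalso
        obtain ⟨e1, e2⟩ := mem_bcol_img.mp hx'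
        obtain ⟨f1, f2⟩ := mem_bcol_img.mp hy'
        exact hcol ⟨by rw [Prod.fst_sub, f1, e1, sub_self],
          by rw [Prod.snd_sub, Prod.fst_sub, f2, e2, sub_self]⟩
      · obtain ⟨j', hj'⟩ := mem_bblk_img.mp hx'
        obtain ⟨k', hk'⟩ := mem_bblk_img.mp hy'
        have hF' : Fd (i', j', k') = y - x := by
          show bfun i' k' - bfun i' j' = y - x
          rw [hk', hj']; exact sub_sub_sub_cancel_right y x g'
        have heq : (i', j', k') = ((i, j, k) : Fin 4 × Fin 6 × Fin 6) :=
          Fd_unique (hF'.trans htF.symm) (htF ▸ hd0)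
        have e1 : i' = i ∧ j' = j ∧ k' = k := by simpa [Prod.ext_iff] using heq
        obtain ⟨rfl, rfl, rfl⟩ := e1
        have hg : g' = x - bfun i' j' := by rw [hj', sub_sub_cancel]
        rw [hg]

theorem unital_Z5cubed_design5 :
    (∀ B ∈ blocks6, B.card = 6) ∧
    (∀ p q : Option (ZMod 5 × ZMod 5 × ZMod 5), p ≠ q →
      ∃! B, B ∈ blocks6 ∧ p ∈ B ∧ q ∈ B) ∧
    (∀ g : ZMod 5 × ZMod 5 × ZMod 5, ∀ B ∈ blocks6, B.image (trG6 g) ∈ blocks6) ∧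
    (∀ g : ZMod 5 × ZMod 5 × ZMod 5, trG6 g none = none) ∧
    (∀ g : ZMod 5 × ZMod 5 × ZMod 5, g ≠ 0 →
      ∀ x : Option (ZMod 5 × ZMod 5 × ZMod 5), trG6 g x = x → x = none) := by
  refine ⟨?_, ?_, ?_, fun g => rfl, ?_⟩
  · rintro B ⟨g, B0, hB0, rfl⟩
    rw [Finset.card_image_of_injective _ (trG6_inj g)]
    rcases bblk_cases hB0 with rfl | ⟨i, rfl⟩
    · decide
    · fin_cases i <;> decide
  · intro p q hpq
    match p, q with
    | none, none => exact absurd rfl hpq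
    | none, some x => exact cover_inf x
    | some x, none =>
      obtain ⟨B, ⟨h1, h2, h3⟩, hu⟩ := cover_inf x
      exact ⟨B, ⟨h1, h3, h2⟩, fun B' ⟨a, b, c⟩ => hu B' ⟨a, c, b⟩⟩
    | some x, some y =>
      exact cover_fin (fun h => hpq (by rw [h]))
  · rintro g B ⟨h, B0, hB0, rfl⟩
    refine ⟨h + g, B0, hB0, ?_⟩
    rw [Finset.image_image]
    have : trG6 g ∘ trG6 h = trG6 (h + g) := funext (trG6_comp h g)
    rw [this]
  · intro g hg x hx
    cases x with
    | none => rfl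
    | some a =>
      exfalso
      rw [trG6_some, Option.some_inj] at hx
      exact hg (by linear_combination hx)
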